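/- Let G_1 be an r_1-regular graph with m_1 edges and let G_2 be an r_2-regular graph with n_2 vertices. Then for every nonzero real number μ that is a Laplacian eigenvalue of G_2 with multiplicity k, the number 2 + μ is a Laplacian eigenvalue of the T-edge neighbourhood corona G_1 ⊟_T G_2 with multiplicity at least m_1·k. -/

import Mathlib

open Finset Matrix Polynomial

/-- The vertex-edge incidence matrix `R(G)` of a graph `G`: rows indexed by vertices,
columns indexed by edges, with entry `1` exactly when the vertex is incident with the edge. -/
def incMat {V : Type*} [DecidableEq V] (G : SimpleGraph V) : Matrix V G.edgeSet ℝ :=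
  Matrix.of fun v e => if v ∈ (e : Sym2 V) then (1 : ℝ) else 0

/-- The `M`-coronal `Γ_M(x)`: the sum of all entries of `(xI - M)⁻¹`. -/
noncomputable def coronal {n : Type*} [Fintype n] [DecidableEq n]
    (M : Matrix n n ℝ) (x : ℝ) : ℝ :=
  ∑ i, ∑ j, (x • (1 : Matrix n n ℝ) - M)⁻¹ i j

/-- The T-vertex neighbourhood corona `G₁ ⊡_T G₂`: the disjoint union of the T-graph
`T(G₁)` (on `V₁ ⊕ E(G₁)`) and one copy of `G₂` for each vertex of `G₁`, where every
vertex of the `i`-th copy of `G₂` is joined to every neighbour of `vᵢ` in `T(G₁)`,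
i.e. to every vertex of `G₁` adjacent to `vᵢ` and to every edge of `G₁` incident with `vᵢ`. -/
def tVertexCorona {V₁ V₂ : Type*} (G₁ : SimpleGraph V₁) (G₂ : SimpleGraph V₂) :
    SimpleGraph (V₁ ⊕ (G₁.edgeSet ⊕ V₁ × V₂)) :=
  SimpleGraph.fromRel fun a b =>
    match a, b with
    | Sum.inl u, Sum.inl v => G₁.Adj u v
    | Sum.inl u, Sum.inr (Sum.inl e) => u ∈ (e : Sym2 V₁)
    | Sum.inl u, Sum.inr (Sum.inr iw) => G₁.Adj u iw.1
    | Sum.inr (Sum.inl e), Sum.inr (Sum.inl f) => ∃ v, v ∈ (e : Sym2 V₁) ∧ v ∈ (f : Sym2 V₁)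
    | Sum.inr (Sum.inl e), Sum.inr (Sum.inr iw) => iw.1 ∈ (e : Sym2 V₁)
    | Sum.inr (Sum.inr iw), Sum.inr (Sum.inr jw) => iw.1 = jw.1 ∧ G₂.Adj iw.2 jw.2
    | _, _ => False

/-- The T-edge neighbourhood corona `G₁ ⊟_T G₂`: the disjoint union of the T-graph
`T(G₁)` (on `V₁ ⊕ E(G₁)`) and one copy of `G₂` for each edge of `G₁`, where every
vertex of the `i`-th copy of `G₂` is joined to the two endpoints of the edge `eᵢ`
(as vertices of `G₁` inside `T(G₁)`). -/
def tEdgeCorona {V₁ V₂ : Type*} (G₁ : SimpleGraph V₁) (G₂ : SimpleGraph V₂) :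
    SimpleGraph (V₁ ⊕ (G₁.edgeSet ⊕ G₁.edgeSet × V₂)) :=
  SimpleGraph.fromRel fun a b =>
    match a, b with
    | Sum.inl u, Sum.inl v => G₁.Adj u v
    | Sum.inl u, Sum.inr (Sum.inl e) => u ∈ (e : Sym2 V₁)
    | Sum.inl u, Sum.inr (Sum.inr ew) => u ∈ (ew.1 : Sym2 V₁)
    | Sum.inr (Sum.inl e), Sum.inr (Sum.inl f) => ∃ v, v ∈ (e : Sym2 V₁) ∧ v ∈ (f : Sym2 V₁)
    | Sum.inr (Sum.inr ew), Sum.inr (Sum.inr fw) => ew.1 = fw.1 ∧ G₂.Adj ew.2 fw.2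
    | _, _ => False

noncomputable instance {V₁ V₂ : Type*} (G₁ : SimpleGraph V₁) (G₂ : SimpleGraph V₂) :
    DecidableRel (tVertexCorona G₁ G₂).Adj := Classical.decRel _

noncomputable instance {V₁ V₂ : Type*} (G₁ : SimpleGraph V₁) (G₂ : SimpleGraph V₂) :
    DecidableRel (tEdgeCorona G₁ G₂).Adj := Classical.decRel _

noncomputable instance {V : Type*} (G : SimpleGraph V) :
    DecidableRel (G.lineGraph).Adj := Classical.decRel _


section Helpers

/-- The characteristic polynomial of a real Hermitian matrix is the product of linear
factors corresponding to its eigenvalues. -/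
theorem herm_charpoly {n : Type*} [Fintype n] [DecidableEq n] {A : Matrix n n ℝ}
    (hA : A.IsHermitian) : A.charpoly = ∏ i, (X - C (hA.eigenvalues i)) := by
  classical
  have h0 : A.charpoly = (Matrix.toEuclideanLin A).charpoly := by
    rw [Matrix.toEuclideanLin_eq_toLin_orthonormal]
    rw [← LinearMap.charpoly_toMatrix (Matrix.toLin (EuclideanSpace.basisFun n ℝ).toBasis
        (EuclideanSpace.basisFun n ℝ).toBasis A) (EuclideanSpace.basisFun n ℝ).toBasis]
    rw [LinearMap.toMatrix_toLin]
  have h1 : (LinearMap.toMatrix hA.eigenvectorBasis.toBasis hA.eigenvectorBasis.toBasis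
      (Matrix.toEuclideanLin A)) = Matrix.diagonal hA.eigenvalues := by
    ext i j
    rw [LinearMap.toMatrix_apply]
    have key : Matrix.toEuclideanLin A (hA.eigenvectorBasis.toBasis j)
        = hA.eigenvalues j • (hA.eigenvectorBasis j : EuclideanSpace ℝ n) := by
      rw [OrthonormalBasis.coe_toBasis]
      have h2 := hA.mulVec_eigenvectorBasis j
      apply PiLp.ext
      intro k
      exact congrFun h2 k
    rw [key, _root_.map_smul]
    simp only [Finsupp.smul_apply, Module.Basis.repr_self, smul_eq_mul]
    by_cases h : i = j
    · subst h; simp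
    · simp [Matrix.diagonal_apply_ne _ h, Finsupp.single_eq_of_ne (Ne.symm h), h]
  have hdiag : charmatrix (Matrix.diagonal hA.eigenvalues)
      = Matrix.diagonal (fun i => (X : ℝ[X]) - C (hA.eigenvalues i)) := by
    ext i j
    by_cases h : i = j
    · subst h; simp [charmatrix_apply_eq]
    · simp [charmatrix_apply_ne _ _ _ h, Matrix.diagonal_apply_ne _ h]
  rw [h0, ← LinearMap.charpoly_toMatrix (Matrix.toEuclideanLin A) hA.eigenvectorBasis.toBasis,
    h1, Matrix.charpoly, hdiag, Matrix.det_diagonal]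

/-- Root multiplicity of a product of distinct linear factors counts the indices. -/
theorem rm_prod {n : Type*} [Fintype n] [DecidableEq n] (d : n → ℝ) (μ : ℝ) :
    (∏ i, ((X : ℝ[X]) - C (d i))).rootMultiplicity μ
      = (univ.filter (fun i => d i = μ)).card := by
  classical
  rw [← Polynomial.count_roots, Polynomial.roots_prod _ _ (by
    rw [Finset.prod_ne_zero_iff]; exact fun i _ => Polynomial.X_sub_C_ne_zero (d i))]
  simp only [Polynomial.roots_X_sub_C]
  rw [Multiset.count_bind]
  simp only [Multiset.count_singleton]
  have : (Multiset.map (fun x => if μ = d x then (1:ℕ) else 0) univ.val).sum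
      = ∑ x : n, if μ = d x then 1 else 0 := rfl
  rw [this]
  rw [Finset.card_filter]
  apply Finset.sum_congr rfl
  intro x _
  simp [eq_comm]

/-- A linearly independent family of eigenvectors bounds the root multiplicity of the
characteristic polynomial of a real symmetric matrix from below. -/
theorem card_le_rm {n ι : Type*} [Fintype n] [DecidableEq n] [Fintype ι]
    {A : Matrix n n ℝ} (hA : A.IsHermitian) (ν : ℝ) (y : ι → (n → ℝ))
    (hli : LinearIndependent ℝ y) (heig : ∀ t, A *ᵥ y t = ν • y t) :
    Fintype.card ι ≤ A.charpoly.rootMultiplicity ν := by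
  classical
  set v := hA.eigenvectorBasis with hv
  set s := univ.filter (fun i => hA.eigenvalues i = ν) with hs
  have hrm : A.charpoly.rootMultiplicity ν = s.card := by
    rw [herm_charpoly hA, rm_prod]
  set t : Finset (n → ℝ) := s.image (fun i => ⇑(v i)) with ht
  have hAT : Aᵀ = A := by
    have := hA.eq
    rwa [Matrix.conjTranspose_eq_transpose_of_trivial] at this
  have hspan : ∀ x : n → ℝ, A *ᵥ x = ν • x → x ∈ Submodule.span ℝ (t : Set (n → ℝ)) := by
    intro x hx
    set x' : EuclideanSpace ℝ n := (WithLp.equiv 2 (n → ℝ)).symm x with hx'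
    have hdot : ∀ i : n, hA.eigenvalues i ≠ ν → ⇑(v i) ⬝ᵥ x = 0 := by
      intro i hi
      have h2 : A *ᵥ ⇑(v i) = hA.eigenvalues i • ⇑(v i) := hA.mulVec_eigenvectorBasis i
      have e1 : hA.eigenvalues i * (⇑(v i) ⬝ᵥ x) = ν * (⇑(v i) ⬝ᵥ x) := by
        calc hA.eigenvalues i * (⇑(v i) ⬝ᵥ x) = (hA.eigenvalues i • ⇑(v i)) ⬝ᵥ x := by
              rw [smul_dotProduct]; rfl
          _ = (A *ᵥ ⇑(v i)) ⬝ᵥ x := by rw [h2]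
          _ = ⇑(v i) ⬝ᵥ (A *ᵥ x) := by
              rw [dotProduct_mulVec, ← Matrix.mulVec_transpose, hAT,
                dotProduct_comm, dotProduct_mulVec, ← Matrix.mulVec_transpose, hAT]
          _ = ⇑(v i) ⬝ᵥ (ν • x) := by rw [hx]
          _ = ν * (⇑(v i) ⬝ᵥ x) := by rw [dotProduct_smul]; rfl
      by_contra hne
      exact hi (mul_right_cancel₀ hne e1)
    have hinner : ∀ i : n, (inner ℝ (v i) x' : ℝ) = ⇑(v i) ⬝ᵥ x := by
      intro i
      simp [PiLp.inner_apply, RCLike.inner_apply, dotProduct, hx', mul_comm]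
    have expand := v.sum_repr' x'
    have expand' : ∑ i : n, (inner ℝ (v i) x' : ℝ) • (⇑(v i) : n → ℝ) = x := by
      have := congrArg WithLp.ofLp expand; simpa [hx'] using this
    rw [← expand']
    refine Submodule.sum_mem _ ?_
    intro i _
    by_cases hiν : hA.eigenvalues i = ν
    · refine Submodule.smul_mem _ _ (Submodule.subset_span ?_)
      simp only [ht, Finset.coe_image, Set.mem_image, Finset.mem_coe]
      exact ⟨i, by simp [hs, hiν], rfl⟩
    · rw [hinner, hdot i hiν, zero_smul]
      exact Submodule.zero_mem _
  calc Fintype.card ι = Module.finrank ℝ (Submodule.span ℝ (Set.range y)) :=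
        (finrank_span_eq_card hli).symm
    _ ≤ Module.finrank ℝ (Submodule.span ℝ (t : Set (n → ℝ))) := by
        apply Submodule.finrank_mono
        rw [Submodule.span_le]
        rintro _ ⟨u, rfl⟩
        exact hspan _ (heig u)
    _ ≤ t.card := finrank_span_finset_le_card t
    _ ≤ s.card := Finset.card_image_le
    _ = _ := hrm.symm

theorem lap_mulVec {V : Type*} [Fintype V] [DecidableEq V] (G : SimpleGraph V)
    [DecidableRel G.Adj] (y : V → ℝ) (v : V) :
    (G.lapMatrix ℝ *ᵥ y) v = ∑ u : V, if G.Adj v u then y v - y u else 0 := by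
  rw [SimpleGraph.lapMatrix_mulVec_apply]
  rw [← Finset.sum_filter, ← SimpleGraph.neighborFinset_eq_filter, Finset.sum_sub_distrib,
    Finset.sum_const, nsmul_eq_mul]
  rfl

theorem eigvec_sum_zero {V : Type*} [Fintype V] [DecidableEq V] (G : SimpleGraph V)
    [DecidableRel G.Adj] {μ : ℝ} (hμ : μ ≠ 0) {x : V → ℝ}
    (hx : G.lapMatrix ℝ *ᵥ x = μ • x) : ∑ w, x w = 0 := by
  have h : ∑ w, (G.lapMatrix ℝ *ᵥ x) w = ∑ w, μ * x w := by
    rw [hx]; rfl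
  have hL : ∀ u, ∑ w, (G.lapMatrix ℝ) w u = 0 := by
    intro u
    have h1 := congrFun (G.lapMatrix_mulVec_const_eq_zero (R := ℝ)) u
    simp only [Matrix.mulVec, dotProduct, mul_one, Pi.zero_apply] at h1
    rw [← h1]
    exact Finset.sum_congr rfl fun w _ => (G.isSymm_lapMatrix (R := ℝ)).apply u w
  have hLHS : ∑ w, (G.lapMatrix ℝ *ᵥ x) w = 0 := by
    simp only [Matrix.mulVec, dotProduct]
    rw [Finset.sum_comm]
    apply Finset.sum_eq_zero
    intro u _
    rw [← Finset.sum_mul, hL u, zero_mul]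
  rw [hLHS] at h
  rw [← Finset.mul_sum] at h
  exact (mul_eq_zero.mp h.symm).resolve_left hμ

theorem sym2_sum {V : Type*} [Fintype V] [DecidableEq V] {G : SimpleGraph V}
    (e : Sym2 V) (he : e ∈ G.edgeSet) (c : ℝ) :
    ∑ u : V, (if u ∈ e then c else 0) = 2 * c := by
  induction e using Sym2.ind with
  | _ u v =>
    rw [SimpleGraph.mem_edgeSet] at he
    have hne : u ≠ v := he.ne
    have key : ∀ a : V, (if a ∈ s(u, v) then c else 0)
        = (if a = u then c else 0) + (if a = v then c else 0) := by
      intro a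
      by_cases h1 : a = u <;> by_cases h2 : a = v <;>
        simp_all [Sym2.mem_iff]
    simp_rw [key]
    rw [Finset.sum_add_distrib, Finset.sum_ite_eq' univ u fun _ => c,
      Finset.sum_ite_eq' univ v fun _ => c]
    simp [two_mul]

theorem li_of_orthonormal {ι V : Type*} [Fintype V] [Fintype ι] [DecidableEq ι]
    (y : ι → V → ℝ) (h : ∀ t u, y t ⬝ᵥ y u = if t = u then 1 else 0) :
    LinearIndependent ℝ y := by
  rw [linearIndependent_iff']
  intro tset g hsum i hi
  have h2 := congrArg (fun z => y i ⬝ᵥ z) hsum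
  simp only [dotProduct_zero] at h2
  have h3 : y i ⬝ᵥ (∑ j ∈ tset, g j • y j) = ∑ j ∈ tset, g j * (y i ⬝ᵥ y j) := by
    simp only [dotProduct, Finset.sum_apply, Pi.smul_apply, smul_eq_mul,
      Finset.mul_sum]
    rw [Finset.sum_comm]
    apply Finset.sum_congr rfl
    intro j _
    apply Finset.sum_congr rfl
    intro k _
    ring
  rw [h3] at h2
  have h4 : ∑ j ∈ tset, g j * (y i ⬝ᵥ y j) = g i := by
    rw [Finset.sum_eq_single i]
    · rw [h i i, if_pos rfl, mul_one]
    · intro j _ hj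
      rw [h i j, if_neg (fun hh => hj hh.symm), mul_zero]
    · intro habs; exact absurd hi habs
  rw [h4] at h2
  exact h2

theorem eigbasis_dot {n : Type*} [Fintype n] [DecidableEq n] {A : Matrix n n ℝ}
    (hA : A.IsHermitian) (i j : n) :
    ⇑(hA.eigenvectorBasis i) ⬝ᵥ ⇑(hA.eigenvectorBasis j) = if i = j then 1 else 0 := by
  have h := (orthonormal_iff_ite.mp hA.eigenvectorBasis.orthonormal) i j
  simpa [PiLp.inner_apply, RCLike.inner_apply, dotProduct, mul_comm] using h

section CoronaHelpers

variable {V₁ V₂ : Type*} {G₁ : SimpleGraph V₁} {G₂ : SimpleGraph V₂}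

theorem tEdgeCorona_adj1 (f : G₁.edgeSet) (p : G₁.edgeSet × V₂) :
    ¬ (tEdgeCorona G₁ G₂).Adj (Sum.inr (Sum.inl f)) (Sum.inr (Sum.inr p)) := by
  simp [tEdgeCorona, SimpleGraph.fromRel_adj]

theorem tEdgeCorona_adj2 (u : V₁) (f : G₁.edgeSet) (w : V₂) :
    (tEdgeCorona G₁ G₂).Adj (Sum.inl u) (Sum.inr (Sum.inr (f, w))) ↔ u ∈ (f : Sym2 V₁) := by
  simp [tEdgeCorona, SimpleGraph.fromRel_adj]

theorem tEdgeCorona_adj3 (u : V₁) (e : G₁.edgeSet) (w : V₂) :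
    (tEdgeCorona G₁ G₂).Adj (Sum.inr (Sum.inr (e, w))) (Sum.inl u) ↔ u ∈ (e : Sym2 V₁) := by
  simp [tEdgeCorona, SimpleGraph.fromRel_adj]

theorem tEdgeCorona_adj4 (e f : G₁.edgeSet) (w w' : V₂) :
    (tEdgeCorona G₁ G₂).Adj (Sum.inr (Sum.inr (e, w))) (Sum.inr (Sum.inr (f, w')))
      ↔ e = f ∧ G₂.Adj w w' := by
  rw [tEdgeCorona, SimpleGraph.fromRel_adj]
  constructor
  · rintro ⟨hne, h | h⟩
    · exact ⟨h.1, h.2⟩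
    · exact ⟨h.1.symm, h.2.symm⟩
  · rintro ⟨rfl, h⟩
    exact ⟨by simp [Prod.ext_iff, h.ne], Or.inl ⟨rfl, h⟩⟩

end CoronaHelpers

/-- The vector on the corona supported on the copy of `G₂` at edge `e₀`. -/
noncomputable def coronaVec {V₁ V₂ : Type*} [DecidableEq V₁] (G₁ : SimpleGraph V₁)
    (e₀ : G₁.edgeSet) (x : V₂ → ℝ) : (V₁ ⊕ (G₁.edgeSet ⊕ G₁.edgeSet × V₂)) → ℝ :=
  Sum.elim (fun _ => 0) (Sum.elim (fun _ => 0)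
    (fun p => if p.1 = e₀ then x p.2 else 0))

theorem coronaVec_dot {V₁ V₂ : Type*} [Fintype V₁] [DecidableEq V₁] [Fintype V₂]
    [DecidableEq V₂] (G₁ : SimpleGraph V₁) [DecidableRel G₁.Adj]
    (e f : G₁.edgeSet) (x x' : V₂ → ℝ) :
    coronaVec G₁ e x ⬝ᵥ coronaVec (V₂ := V₂) G₁ f x'
      = if e = f then x ⬝ᵥ x' else 0 := by
  classical
  rw [dotProduct, Fintype.sum_sum_type, Fintype.sum_sum_type]
  have h1 : ∑ v : V₁, coronaVec G₁ e x (Sum.inl v) * coronaVec G₁ f x' (Sum.inl v) = 0 := by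
    apply Finset.sum_eq_zero; intro v _; simp [coronaVec]
  have h2 : ∑ g : G₁.edgeSet, coronaVec G₁ e x (Sum.inr (Sum.inl g))
      * coronaVec G₁ f x' (Sum.inr (Sum.inl g)) = 0 := by
    apply Finset.sum_eq_zero; intro g _; simp [coronaVec]
  rw [h1, h2]
  have h3 : ∀ p : G₁.edgeSet × V₂, coronaVec G₁ e x (Sum.inr (Sum.inr p))
      * coronaVec G₁ f x' (Sum.inr (Sum.inr p))
      = if p.1 = e ∧ p.1 = f then x p.2 * x' p.2 else 0 := by
    intro p
    simp only [coronaVec, Sum.elim_inr]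
    by_cases hh1 : p.1 = e <;> by_cases hh2 : p.1 = f <;> simp [hh1, hh2]
  simp_rw [h3]
  rw [Fintype.sum_prod_type]
  by_cases hef : e = f
  · subst hef
    simp only [and_self]
    have : ∀ g : G₁.edgeSet, (∑ w : V₂, if g = e then x w * x' w else 0)
        = if g = e then ∑ w : V₂, x w * x' w else 0 := by
      intro g; split_ifs <;> simp
    simp_rw [this]
    rw [Finset.sum_ite_eq' univ e]
    simp [dotProduct]
  · rw [if_neg hef]
    simp only [zero_add]
    apply Finset.sum_eq_zero; intro g _
    apply Finset.sum_eq_zero; intro w _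
    rw [if_neg]
    rintro ⟨rfl, rfl⟩
    exact hef rfl

theorem corona_eigvec {V₁ V₂ : Type*} [Fintype V₁] [DecidableEq V₁] [Fintype V₂]
    [DecidableEq V₂] (G₁ : SimpleGraph V₁) (G₂ : SimpleGraph V₂)
    [DecidableRel G₁.Adj] [DecidableRel G₂.Adj]
    (e₀ : G₁.edgeSet) (μ : ℝ) (x : V₂ → ℝ) (hxsum : ∑ w, x w = 0)
    (hx : G₂.lapMatrix ℝ *ᵥ x = μ • x) :
    (tEdgeCorona G₁ G₂).lapMatrix ℝ *ᵥ (coronaVec G₁ e₀ x)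
      = (2 + μ) • (coronaVec G₁ e₀ x) := by
  classical
  funext a
  rw [lap_mulVec, Fintype.sum_sum_type, Fintype.sum_sum_type]
  obtain (u | f | ⟨e, w⟩) := a
  · have h1 : ∑ v : V₁, (if (tEdgeCorona G₁ G₂).Adj (Sum.inl u) (Sum.inl v)
        then coronaVec G₁ e₀ x (Sum.inl u) - coronaVec G₁ e₀ x (Sum.inl v) else 0) = 0 := by
      apply Finset.sum_eq_zero; intro v _; simp [coronaVec]
    have h2 : ∑ f : G₁.edgeSet, (if (tEdgeCorona G₁ G₂).Adj (Sum.inl u) (Sum.inr (Sum.inl f))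
        then coronaVec G₁ e₀ x (Sum.inl u) - coronaVec G₁ e₀ x (Sum.inr (Sum.inl f)) else 0)
        = 0 := by
      apply Finset.sum_eq_zero; intro f _; simp [coronaVec]
    have h3 : ∑ p : G₁.edgeSet × V₂,
        (if (tEdgeCorona G₁ G₂).Adj (Sum.inl u) (Sum.inr (Sum.inr p))
        then coronaVec G₁ e₀ x (Sum.inl u) - coronaVec G₁ e₀ x (Sum.inr (Sum.inr p)) else 0)
        = 0 := by
      rw [Fintype.sum_prod_type]
      apply Finset.sum_eq_zero; intro f _
      have : ∀ w : V₂, (if (tEdgeCorona G₁ G₂).Adj (Sum.inl u) (Sum.inr (Sum.inr (f, w)))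
          then coronaVec G₁ e₀ x (Sum.inl u) - coronaVec G₁ e₀ x (Sum.inr (Sum.inr (f, w)))
          else 0) = if u ∈ (f : Sym2 V₁) then -(if f = e₀ then x w else 0) else 0 := by
        intro w
        simp only [tEdgeCorona_adj2]
        by_cases h : u ∈ (f : Sym2 V₁) <;> simp [h, coronaVec]
      simp_rw [this]
      by_cases h : u ∈ (f : Sym2 V₁)
      · simp only [if_pos h]
        by_cases hf : f = e₀
        · simp [hf, Finset.sum_neg_distrib, hxsum]
        · simp [hf]
      · simp [h]
    rw [h1, h2, h3]
    simp [coronaVec]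
  · have h1 : ∑ v : V₁, (if (tEdgeCorona G₁ G₂).Adj (Sum.inr (Sum.inl f)) (Sum.inl v)
        then coronaVec G₁ e₀ x (Sum.inr (Sum.inl f)) - coronaVec G₁ e₀ x (Sum.inl v) else 0)
        = 0 := by
      apply Finset.sum_eq_zero; intro v _; simp [coronaVec]
    have h2 : ∑ g : G₁.edgeSet,
        (if (tEdgeCorona G₁ G₂).Adj (Sum.inr (Sum.inl f)) (Sum.inr (Sum.inl g))
        then coronaVec G₁ e₀ x (Sum.inr (Sum.inl f)) - coronaVec G₁ e₀ x (Sum.inr (Sum.inl g))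
        else 0) = 0 := by
      apply Finset.sum_eq_zero; intro g _; simp [coronaVec]
    have h3 : ∑ p : G₁.edgeSet × V₂,
        (if (tEdgeCorona G₁ G₂).Adj (Sum.inr (Sum.inl f)) (Sum.inr (Sum.inr p))
        then coronaVec G₁ e₀ x (Sum.inr (Sum.inl f)) - coronaVec G₁ e₀ x (Sum.inr (Sum.inr p))
        else 0) = 0 := by
      apply Finset.sum_eq_zero; intro p _; simp [tEdgeCorona_adj1]
    rw [h1, h2, h3]
    simp [coronaVec]
  · have h1 : ∑ v : V₁, (if (tEdgeCorona G₁ G₂).Adj (Sum.inr (Sum.inr (e, w))) (Sum.inl v)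
        then coronaVec G₁ e₀ x (Sum.inr (Sum.inr (e, w))) - coronaVec G₁ e₀ x (Sum.inl v)
        else 0) = 2 * (if e = e₀ then x w else 0) := by
      have : ∀ v : V₁, (if (tEdgeCorona G₁ G₂).Adj (Sum.inr (Sum.inr (e, w))) (Sum.inl v)
          then coronaVec G₁ e₀ x (Sum.inr (Sum.inr (e, w))) - coronaVec G₁ e₀ x (Sum.inl v)
          else 0) = if v ∈ (e : Sym2 V₁) then (if e = e₀ then x w else 0) else 0 := by
        intro v
        simp only [tEdgeCorona_adj3]
        by_cases h : v ∈ (e : Sym2 V₁) <;> simp [h, coronaVec]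
      simp_rw [this]
      exact sym2_sum (e : Sym2 V₁) e.2 _
    have h2 : ∑ g : G₁.edgeSet,
        (if (tEdgeCorona G₁ G₂).Adj (Sum.inr (Sum.inr (e, w))) (Sum.inr (Sum.inl g))
        then coronaVec G₁ e₀ x (Sum.inr (Sum.inr (e, w))) - coronaVec G₁ e₀ x (Sum.inr (Sum.inl g))
        else 0) = 0 := by
      apply Finset.sum_eq_zero; intro g _
      rw [if_neg (fun h => tEdgeCorona_adj1 g (e, w) h.symm)]
    have h3 : ∑ p : G₁.edgeSet × V₂,
        (if (tEdgeCorona G₁ G₂).Adj (Sum.inr (Sum.inr (e, w))) (Sum.inr (Sum.inr p))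
        then coronaVec G₁ e₀ x (Sum.inr (Sum.inr (e, w))) - coronaVec G₁ e₀ x (Sum.inr (Sum.inr p))
        else 0) = μ * (if e = e₀ then x w else 0) := by
      rw [Fintype.sum_prod_type]
      have hout : ∀ f : G₁.edgeSet, ∀ w' : V₂,
          (if (tEdgeCorona G₁ G₂).Adj (Sum.inr (Sum.inr (e, w))) (Sum.inr (Sum.inr (f, w')))
          then coronaVec G₁ e₀ x (Sum.inr (Sum.inr (e, w)))
            - coronaVec G₁ e₀ x (Sum.inr (Sum.inr (f, w')))
          else 0)
          = if e = f then (if G₂.Adj w w' then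
              (if e = e₀ then x w else 0) - (if f = e₀ then x w' else 0) else 0) else 0 := by
        intro f w'
        simp only [tEdgeCorona_adj4]
        by_cases h1 : e = f <;> by_cases h2 : G₂.Adj w w' <;> simp [h1, h2, coronaVec]
      simp_rw [hout]
      have hswap : ∀ f : G₁.edgeSet, (∑ w' : V₂, if e = f then (if G₂.Adj w w' then
          (if e = e₀ then x w else 0) - (if f = e₀ then x w' else 0) else 0) else 0)
          = if e = f then (∑ w' : V₂, if G₂.Adj w w' then
          (if e = e₀ then x w else 0) - (if f = e₀ then x w' else 0) else 0) else 0 := by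
        intro f; split_ifs <;> simp
      simp_rw [hswap]
      rw [Finset.sum_ite_eq univ e]
      simp only [Finset.mem_univ, if_pos]
      by_cases he : e = e₀
      · subst he
        simp only [eq_self_iff_true, if_true]
        have := congrFun hx w
        rw [lap_mulVec] at this
        simp only [Pi.smul_apply, smul_eq_mul] at this
        rw [this]
      · simp only [if_neg he]
        simp
    rw [h1, h2, h3]
    simp only [coronaVec, Sum.elim_inr, Pi.smul_apply, smul_eq_mul]
    ring

end Helpers

/-- For every nonzero Laplacian eigenvalue `mu` of the `r₂`-regular graph `G₂`, of
multiplicity `k`, the number `2 + mu` is a Laplacian eigenvalue of the T-edge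
neighbourhood corona `G₁ ⊟_T G₂` with multiplicity at least `m₁ · k`. -/
theorem lap_eigenvalue_mult_tEdgeCorona {V₁ V₂ : Type*} [Fintype V₁] [DecidableEq V₁]
    [Fintype V₂] [DecidableEq V₂]
    (G₁ : SimpleGraph V₁) (G₂ : SimpleGraph V₂)
    [DecidableRel G₁.Adj] [DecidableRel G₂.Adj]
    (r₁ r₂ : ℕ) (hreg₁ : G₁.IsRegularOfDegree r₁) (hreg₂ : G₂.IsRegularOfDegree r₂)
    (mu : ℝ) (hmu : mu ≠ 0) (k : ℕ) (hk : 0 < k)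
    (hmult : ((G₂.lapMatrix ℝ).charpoly).rootMultiplicity mu = k) :
    Fintype.card G₁.edgeSet * k ≤
      (((tEdgeCorona G₁ G₂).lapMatrix ℝ).charpoly).rootMultiplicity (2 + mu) := by
  classical
  have h2herm : (G₂.lapMatrix ℝ).IsHermitian := by
    rw [Matrix.IsHermitian, Matrix.conjTranspose_eq_transpose_of_trivial]
    exact G₂.isSymm_lapMatrix ℝ
  set s := univ.filter (fun i => h2herm.eigenvalues i = mu) with hs
  have hscard : s.card = k := by
    rw [← hmult, herm_charpoly h2herm, rm_prod]
  have hHerm : ((tEdgeCorona G₁ G₂).lapMatrix ℝ).IsHermitian := by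
    rw [Matrix.IsHermitian, Matrix.conjTranspose_eq_transpose_of_trivial]
    exact (tEdgeCorona G₁ G₂).isSymm_lapMatrix ℝ
  -- the family of eigenvectors on the corona
  set y : (G₁.edgeSet × {i // i ∈ s}) → (V₁ ⊕ (G₁.edgeSet ⊕ G₁.edgeSet × V₂)) → ℝ :=
    fun t => coronaVec G₁ t.1 ⇑(h2herm.eigenvectorBasis t.2.1) with hy
  have heigvec : ∀ i : {i // i ∈ s},
      G₂.lapMatrix ℝ *ᵥ ⇑(h2herm.eigenvectorBasis i.1) = mu • ⇑(h2herm.eigenvectorBasis i.1) := by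
    intro i
    have := h2herm.mulVec_eigenvectorBasis i.1
    have hi : h2herm.eigenvalues i.1 = mu := (Finset.mem_filter.mp i.2).2
    rwa [hi] at this
  have hli : LinearIndependent ℝ y := by
    apply li_of_orthonormal
    intro t u
    rw [hy]
    simp only
    rw [coronaVec_dot, eigbasis_dot]
    by_cases h1 : t.1 = u.1 <;> by_cases h2 : (t.2 : V₂) = (u.2 : V₂)
    · have : t = u := Prod.ext h1 (Subtype.ext h2)
      simp [this]
    · have : t ≠ u := fun hh => h2 (by rw [hh])
      simp [h1, h2, this]
    · have : t ≠ u := fun hh => h1 (by rw [hh])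
      simp [h1, this]
    · have : t ≠ u := fun hh => h1 (by rw [hh])
      simp [h1, this]
  have heig : ∀ t, (tEdgeCorona G₁ G₂).lapMatrix ℝ *ᵥ y t = (2 + mu) • y t := by
    intro t
    exact corona_eigvec G₁ G₂ t.1 mu _ (eigvec_sum_zero G₂ hmu (heigvec t.2)) (heigvec t.2)
  have hmain := card_le_rm hHerm (2 + mu) y hli heig
  calc Fintype.card G₁.edgeSet * k
      = Fintype.card (G₁.edgeSet × {i // i ∈ s}) := by
        rw [Fintype.card_prod, Fintype.card_coe, hscard]
    _ ≤ _ := hmain
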